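/- (Closed-form solution of the gradient-flow dynamics.) Let H be a real Hilbert space with a Hilbert basis (e_k)_{k∈ℕ}, let λ : ℕ → ℝ satisfy λ_k ≥ 0, and let A : H →L[ℝ] H be a continuous linear map with A e_k = λ_k • e_k for every k. Let f* ∈ H and let u : ℝ → H satisfy ⟪u t, e_k⟫ = (1 − exp(−λ_k · t)) · ⟪f*, e_k⟫ for every t ∈ ℝ and every k. Then u 0 = 0 and, for every t ∈ ℝ, u has derivative A (f* − u t) at t (HasDerivAt u (A (f* − u t)) t); i.e., u is the solution of the gradient-flow ODE d/dt f_t = −A (f_t − f*) with initial condition f_0 = 0. -/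

import Mathlib

open scoped RealInnerProductSpace

open NormedSpace

private lemma diag_inner {H : Type*} [NormedAddCommGroup H]
    [InnerProductSpace ℝ H] [CompleteSpace H]
    (e : HilbertBasis ℕ ℝ H) (lam : ℕ → ℝ)
    (A : H →L[ℝ] H) (hA : ∀ k : ℕ, A (e k) = lam k • e k)
    (x : H) (k : ℕ) : ⟪A x, e k⟫ = lam k * ⟪x, e k⟫ := by
  have hs : HasSum (fun i => A (e.repr x i • e i)) (A x) :=
    (e.hasSum_repr x).mapL A
  have hs2 : HasSum (fun i => ⟪e k, A (e.repr x i • e i)⟫) ⟪e k, A x⟫ :=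
    hs.mapL (innerSL ℝ (e k))
  have horth := orthonormal_iff_ite.mp e.orthonormal
  have heq : (fun i => ⟪e k, A (e.repr x i • e i)⟫)
      = fun i => if i = k then lam k * ⟪x, e k⟫ else 0 := by
    funext i
    rw [map_smul, hA i, real_inner_smul_right, real_inner_smul_right, horth]
    by_cases h : i = k
    · subst h
      simp [e.repr_apply_apply, real_inner_comm]
      ring
    · simp [h, Ne.symm h]
  rw [heq] at hs2
  have := (hasSum_ite_eq k (lam k * ⟪x, e k⟫)).unique hs2
  rw [real_inner_comm]
  simpa using this.symm

/-- Closed-form solution of the gradient-flow dynamics: if `u` has eigencoefficients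
`(1 − e^{−λ_k t}) ⟪f*, e_k⟫`, then `u 0 = 0` and `u` solves the ODE
`d/dt u t = A (f* − u t)`, where `A` is the kernel operator, diagonal in the basis `e`. -/
theorem gradientFlow_closed_form {H : Type*} [NormedAddCommGroup H]
    [InnerProductSpace ℝ H] [CompleteSpace H]
    (e : HilbertBasis ℕ ℝ H) (lam : ℕ → ℝ) (hlam : ∀ k, 0 ≤ lam k)
    (A : H →L[ℝ] H) (hA : ∀ k : ℕ, A (e k) = lam k • e k)
    (fstar : H) (u : ℝ → H)
    (hu : ∀ (t : ℝ) (k : ℕ),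
      ⟪u t, e k⟫ = (1 - Real.exp (-(lam k * t))) * ⟪fstar, e k⟫) :
    u 0 = 0 ∧ ∀ t : ℝ, HasDerivAt u (A (fstar - u t)) t := by
  classical
  -- extensionality via the Hilbert basis
  have hext : ∀ x y : H, (∀ k, ⟪x, e k⟫ = ⟪y, e k⟫) → x = y := by
    intro x y h
    apply e.repr.injective
    ext k
    rw [e.repr_apply_apply, e.repr_apply_apply, real_inner_comm, h k, real_inner_comm]
  -- coefficients of powers of t • (-A)
  have hpow : ∀ (t : ℝ) (n : ℕ) (x : H) (k : ℕ),
      ⟪((t • (-A)) ^ n) x, e k⟫ = (-(lam k * t)) ^ n * ⟪x, e k⟫ := by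
    intro t n
    induction n with
    | zero => intro x k; simp
    | succ n ih =>
      intro x k
      rw [pow_succ']
      have : ((t • (-A)) * (t • (-A)) ^ n) x = (t • (-A)) (((t • (-A)) ^ n) x) := rfl
      rw [this]
      have h1 : ∀ y : H, ⟪(t • (-A)) y, e k⟫ = -(lam k * t) * ⟪y, e k⟫ := by
        intro y
        simp only [ContinuousLinearMap.smul_apply, ContinuousLinearMap.neg_apply,
          real_inner_smul_left, inner_neg_left]
        rw [diag_inner e lam A hA]
        ring
      rw [h1, ih]
      ring
  -- coefficients of exp (t • (-A)) fstar
  have hexp : ∀ (t : ℝ) (k : ℕ),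
      ⟪exp (t • (-A)) fstar, e k⟫ = Real.exp (-(lam k * t)) * ⟪fstar, e k⟫ := by
    intro t k
    have hs : HasSum (fun n : ℕ => ((Nat.factorial n : ℝ)⁻¹) • (t • (-A)) ^ n) (exp (t • (-A))) :=
      exp_series_hasSum_exp' _
    have hs1 : HasSum (fun n : ℕ => (((Nat.factorial n : ℝ)⁻¹) • (t • (-A)) ^ n) fstar)
        (exp (t • (-A)) fstar) := hs.mapL (ContinuousLinearMap.apply ℝ H fstar)
    have hs2 : HasSum (fun n : ℕ => ⟪e k, (((Nat.factorial n : ℝ)⁻¹) • (t • (-A)) ^ n) fstar⟫)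
        ⟪e k, exp (t • (-A)) fstar⟫ := hs1.mapL (innerSL ℝ (e k))
    have heq : (fun n : ℕ => ⟪e k, (((Nat.factorial n : ℝ)⁻¹) • (t • (-A)) ^ n) fstar⟫)
        = fun n : ℕ => ((Nat.factorial n : ℝ)⁻¹) * (-(lam k * t)) ^ n * ⟪fstar, e k⟫ := by
      funext n
      rw [real_inner_comm]
      simp only [ContinuousLinearMap.smul_apply, real_inner_smul_left]
      rw [hpow t n fstar k]
      ring
    rw [heq] at hs2
    have hr : HasSum (fun n : ℕ => ((Nat.factorial n : ℝ)⁻¹) * (-(lam k * t)) ^ n * ⟪fstar, e k⟫)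
        (Real.exp (-(lam k * t)) * ⟪fstar, e k⟫) := by
      have h := exp_series_hasSum_exp' (𝕂 := ℝ) (-(lam k * t))
      rw [← Real.exp_eq_exp_ℝ] at h
      simpa [smul_eq_mul] using h.mul_right (⟪fstar, e k⟫)
    rw [real_inner_comm]
    exact hs2.unique hr
  -- closed form
  have hu' : ∀ t : ℝ, u t = fstar - exp (t • (-A)) fstar := by
    intro t
    apply hext
    intro k
    rw [hu, inner_sub_left, hexp]
    ring
  constructor
  · apply hext
    intro k
    rw [hu]
    simp
  · intro t
    have hfun : u = fun s => fstar - exp (s • (-A)) fstar := funext hu'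
    have hd : HasDerivAt (fun s : ℝ => exp (s • (-A)))
        (exp (t • (-A)) * (-A)) t := hasDerivAt_exp_smul_const (-A) t
    have hd2 : HasDerivAt (fun s : ℝ => exp (s • (-A)) fstar)
        ((exp (t • (-A)) * (-A)) fstar) t := by
      have := hd.clm_apply (hasDerivAt_const t fstar)
      simpa using this
    have hd3 : HasDerivAt (fun s : ℝ => fstar - exp (s • (-A)) fstar)
        (0 - (exp (t • (-A)) * (-A)) fstar) t :=
      (hasDerivAt_const t fstar).sub hd2
    have hcomm : Commute A (exp (t • (-A))) := by
      refine Commute.exp_right ?_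
      show A * (t • (-A)) = (t • (-A)) * A
      ext x
      simp [ContinuousLinearMap.mul_apply]
    have happ : A (exp (t • (-A)) fstar) = exp (t • (-A)) (A fstar) := by
      have h := congrArg (fun (B : H →L[ℝ] H) => B fstar) hcomm.eq
      simpa [ContinuousLinearMap.mul_apply] using h
    have hval : A (fstar - u t) = 0 - (exp (t • (-A)) * (-A)) fstar := by
      rw [hu' t, sub_sub_cancel, happ]
      simp [ContinuousLinearMap.mul_apply]
    rw [hval, hfun]
    exact hd3
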